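/- The functions C₃, C₄, …, Cₙ on T ℝⁿ, where C_k = Σ_{2 ≤ i < j ≤ k} (q_i q̇_j − q_j q̇_i)², are functionally independent on an open dense subset: the (n−2)×(2n) Jacobian matrix of (C₃,…,Cₙ) with respect to (q₂,…,qₙ,q̇₂,…,q̇ₙ) has rank n−2 generically, since its submatrix (∂C_k/∂q_j)_{3≤k≤n, 2≤j≤n} is lower-triangular-like with (k,j)-entries vanishing for j > k and generically nonzero otherwise. -/

import Mathlib

/-- Partial derivative with respect to the coordinate `qᵢ` on `Tℝⁿ`
(points being pairs `(q, q̇)` of `ℕ`-indexed families). -/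
noncomputable def pderivQ (i : ℕ) (F : (ℕ → ℝ) × (ℕ → ℝ) → ℝ)
    (z : (ℕ → ℝ) × (ℕ → ℝ)) : ℝ :=
  deriv (fun s => F (Function.update z.1 i s, z.2)) (z.1 i)

/-- Partial derivative with respect to the velocity coordinate `q̇ᵢ`. -/
noncomputable def pderivV (i : ℕ) (F : (ℕ → ℝ) × (ℕ → ℝ) → ℝ)
    (z : (ℕ → ℝ) × (ℕ → ℝ)) : ℝ :=
  deriv (fun s => F (z.1, Function.update z.2 i s)) (z.2 i)

/-- The angular momentum component `L_{ij} = qᵢ q̇ⱼ − qⱼ q̇ᵢ`. -/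
def angMom (i j : ℕ) (z : (ℕ → ℝ) × (ℕ → ℝ)) : ℝ :=
  z.1 i * z.2 j - z.1 j * z.2 i

/-- `C_k = Σ_{2 ≤ i < j ≤ k} L_{ij}²`. -/
def Cfun (k : ℕ) (z : (ℕ → ℝ) × (ℕ → ℝ)) : ℝ :=
  ∑ i ∈ Finset.Icc 2 k, ∑ j ∈ Finset.Icc (i+1) k, (angMom i j z)^2

/-- The `(n−2) × 2(n−1)` Jacobian matrix of `(C₃, …, Cₙ)` with respect to the
coordinates `(q₂,…,qₙ, q̇₂,…,q̇ₙ)`: row `k` corresponds to `C_{k+3}` and the column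
`inl j` (resp. `inr j`) to the coordinate `q_{j+2}` (resp. `q̇_{j+2}`). -/
noncomputable def jacC (n : ℕ) (z : (ℕ → ℝ) × (ℕ → ℝ)) :
    Matrix (Fin (n-2)) (Fin (n-1) ⊕ Fin (n-1)) ℝ :=
  fun k j => Sum.elim (fun j : Fin (n-1) => pderivQ ((j : ℕ) + 2) (Cfun ((k : ℕ) + 3)) z)
                      (fun j : Fin (n-1) => pderivV ((j : ℕ) + 2) (Cfun ((k : ℕ) + 3)) z) j

/-- auxiliary: `f_k = Σ_{2 ≤ i ≤ k-1} L_{ik} q̇_i`. -/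
def fAux (k : ℕ) (z : (ℕ → ℝ) × (ℕ → ℝ)) : ℝ :=
  ∑ i ∈ Finset.Icc 2 (k-1), angMom i k z * z.2 i

lemma pderivQ_Cfun_zero {k m : ℕ} (hkm : k < m) (z : (ℕ → ℝ) × (ℕ → ℝ)) :
    pderivQ m (Cfun k) z = 0 := by
  have h : (fun s => Cfun k (Function.update z.1 m s, z.2)) = fun _ => Cfun k z := by
    funext s
    unfold Cfun angMom
    refine Finset.sum_congr rfl fun i hi => Finset.sum_congr rfl fun j hj => ?_
    simp only [Finset.mem_Icc] at hi hj
    simp only [Function.update_apply]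
    rw [if_neg (by omega), if_neg (by omega)]
  rw [pderivQ, h, deriv_const]

lemma hasDerivAt_Cfun_diag (k : ℕ) (hk : 3 ≤ k) (z : (ℕ → ℝ) × (ℕ → ℝ)) :
    HasDerivAt (fun s => Cfun k (Function.update z.1 k s, z.2))
      (-2 * fAux k z) (z.1 k) := by
  have hD : (∑ i ∈ Finset.Icc 2 k, ∑ j ∈ Finset.Icc (i+1) k,
      if j = k then 2 * angMom i k z * (-(1 * z.2 i)) else 0) = -2 * fAux k z := by
    have h1 : ∀ i : ℕ, (∑ j ∈ Finset.Icc (i+1) k,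
        if j = k then 2 * angMom i k z * (-(1 * z.2 i)) else 0)
        = if i + 1 ≤ k then -2 * (angMom i k z * z.2 i) else 0 := by
      intro i
      rw [Finset.sum_ite_eq']
      by_cases h : i + 1 ≤ k
      · rw [if_pos (Finset.mem_Icc.mpr ⟨h, le_rfl⟩), if_pos h]; ring
      · rw [if_neg (by simp only [Finset.mem_Icc]; omega), if_neg h]
    simp only [h1]
    rw [← Finset.sum_filter]
    have h2 : (Finset.Icc 2 k).filter (fun i => i + 1 ≤ k) = Finset.Icc 2 (k-1) := by
      ext a; simp only [Finset.mem_filter, Finset.mem_Icc]; omega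
    rw [h2, fAux, Finset.mul_sum]
  rw [← hD]
  simp only [Cfun]
  apply HasDerivAt.fun_sum
  intro i hi
  apply HasDerivAt.fun_sum
  intro j hj
  simp only [Finset.mem_Icc] at hi hj
  have hik : i ≠ k := by omega
  by_cases hjk : j = k
  · rw [if_pos hjk]
    have hfun : (fun s => (angMom i j (Function.update z.1 k s, z.2))^2)
        = fun s => (z.1 i * z.2 k - s * z.2 i)^2 := by
      funext s; simp [angMom, Function.update_apply, hik, hjk]
    rw [hfun]
    have h1 : HasDerivAt (fun s : ℝ => z.1 i * z.2 k - s * z.2 i) (-(1 * z.2 i)) (z.1 k) :=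
      ((hasDerivAt_id (z.1 k)).mul_const (z.2 i)).const_sub (z.1 i * z.2 k)
    have h2 := h1.fun_pow 2
    convert h2 using 1
    · rfl
    simp [angMom, hjk]
    try ring
  · rw [if_neg hjk]
    have hfun : (fun s => (angMom i j (Function.update z.1 k s, z.2))^2)
        = fun _ => (angMom i j z)^2 := by
      funext s; simp [angMom, Function.update_apply, hik, hjk]
    rw [hfun]
    exact hasDerivAt_const _ _

lemma coeff3_aux (a b c d : ℝ) :
    (Polynomial.C a + Polynomial.C b * Polynomial.X + Polynomial.C c * Polynomial.X ^ 2
      + Polynomial.C d * Polynomial.X ^ 3).coeff 3 = d := by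
  simp [Polynomial.coeff_add, Polynomial.coeff_C_mul, Polynomial.coeff_X_pow,
    Polynomial.coeff_C, Polynomial.coeff_X]

lemma pderivQ_Cfun_diag (k : ℕ) (hk : 3 ≤ k) (z : (ℕ → ℝ) × (ℕ → ℝ)) :
    pderivQ k (Cfun k) z = -2 * fAux k z :=
  (hasDerivAt_Cfun_diag k hk z).deriv

/-- The functions `C₃, …, Cₙ` are functionally independent on an open
dense subset of phase space: the Jacobian matrix of `(C₃,…,Cₙ)` with respect to
`(q₂,…,qₙ, q̇₂,…,q̇ₙ)` has rank `n − 2` there. -/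
theorem stmt_11 (n : ℕ) (hn : 3 ≤ n) :
    ∃ s : Set ((ℕ → ℝ) × (ℕ → ℝ)), IsOpen s ∧ Dense s ∧
      ∀ z ∈ s, (jacC n z).rank = n - 2 := by
  have hcont : ∀ k : ℕ, Continuous (fAux k) := by
    intro k
    unfold fAux angMom
    apply continuous_finset_sum
    intro i _
    exact ((((continuous_apply i).comp continuous_fst).mul
        ((continuous_apply k).comp continuous_snd)).sub
        (((continuous_apply k).comp continuous_fst).mul
        ((continuous_apply i).comp continuous_snd))).mul
        ((continuous_apply i).comp continuous_snd)
  refine ⟨{z | ∀ k ∈ Finset.Icc 3 n, fAux k z ≠ 0}, ?_, ?_, ?_⟩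
  · have h : {z : (ℕ → ℝ) × (ℕ → ℝ) | ∀ k ∈ Finset.Icc 3 n, fAux k z ≠ 0}
        = ⋂ k ∈ Finset.Icc 3 n, (fAux k) ⁻¹' {0}ᶜ := by
      ext z; simp
    rw [h]
    exact isOpen_biInter_finset fun k _ =>
      IsOpen.preimage (hcont k) isOpen_compl_singleton
  · rw [dense_iff_inter_open]
    rintro U hU ⟨z, hzU⟩
    set γ : ℝ → (ℕ → ℝ) × (ℕ → ℝ) :=
      fun t => (fun i => z.1 i + t * i, fun i => z.2 i + t) with hγdef
    have hγc : Continuous γ := by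
      apply Continuous.prodMk
      · exact continuous_pi fun i => continuous_const.add (continuous_id.mul continuous_const)
      · exact continuous_pi fun i => continuous_const.add continuous_id
    have hγ0 : γ 0 = z := by
      rw [hγdef]
      ext i <;> simp
    have hpre : γ ⁻¹' U ∈ nhds (0:ℝ) := by
      apply hγc.continuousAt.preimage_mem_nhds
      rw [hγ0]; exact hU.mem_nhds hzU
    have key : ∀ k, 3 ≤ k → {t : ℝ | fAux k (γ t) = 0}.Finite := by
      intro k hk
      set a : ℝ := ∑ i ∈ Finset.Icc 2 (k-1), angMom i k z * z.2 i with ha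
      set b : ℝ := ∑ i ∈ Finset.Icc 2 (k-1),
          (angMom i k z + z.2 i * (z.1 i + i * z.2 k - z.1 k - k * z.2 i)) with hb
      set c : ℝ := ∑ i ∈ Finset.Icc 2 (k-1),
          ((z.1 i + i * z.2 k - z.1 k - k * z.2 i) + z.2 i * ((i:ℝ) - k)) with hc
      set d : ℝ := ∑ i ∈ Finset.Icc 2 (k-1), ((i:ℝ) - (k:ℝ)) with hd
      set P : Polynomial ℝ :=
        Polynomial.C a + Polynomial.C b * Polynomial.X
        + Polynomial.C c * Polynomial.X ^ 2
        + Polynomial.C d * Polynomial.X ^ 3 with hP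
      have hev : ∀ t : ℝ, fAux k (γ t) = P.eval t := by
        intro t
        rw [hP]
        simp only [Polynomial.eval_add, Polynomial.eval_mul, Polynomial.eval_pow,
          Polynomial.eval_C, Polynomial.eval_X]
        rw [ha, hb, hc, hd, Finset.sum_mul, Finset.sum_mul, Finset.sum_mul,
          ← Finset.sum_add_distrib, ← Finset.sum_add_distrib, ← Finset.sum_add_distrib]
        unfold fAux angMom
        refine Finset.sum_congr rfl fun i hi => ?_
        simp only [hγdef]
        ring
      have hC3 : d < 0 := by
        rw [hd]
        have hne : (Finset.Icc 2 (k-1)).Nonempty := ⟨2, Finset.mem_Icc.mpr ⟨le_rfl, by omega⟩⟩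
        have h0 : ∀ i ∈ Finset.Icc 2 (k-1), ((i:ℝ) - (k:ℝ)) < 0 := by
          intro i hi
          simp only [Finset.mem_Icc] at hi
          have : (i:ℝ) < (k:ℝ) := by exact_mod_cast (by omega : i < k)
          linarith
        have := Finset.sum_lt_sum_of_nonempty hne h0
        simpa using this
      have hPne : P ≠ 0 := by
        intro h
        have hcc : P.coeff 3 = 0 := by rw [h]; simp
        rw [hP, coeff3_aux] at hcc
        exact absurd hcc (ne_of_lt hC3)
      refine (Polynomial.finite_setOf_isRoot hPne).subset ?_
      intro t ht
      simp only [Set.mem_setOf_eq] at ht ⊢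
      rw [Polynomial.IsRoot, ← hev]
      exact ht
    have hTfin : (⋃ k ∈ Finset.Icc 3 n, {t : ℝ | fAux k (γ t) = 0}).Finite :=
      Set.Finite.biUnion (Finset.Icc 3 n).finite_toSet
        (fun k hk => key k (Finset.mem_Icc.mp hk).1)
    have hinf : (γ ⁻¹' U).Infinite := infinite_of_mem_nhds (0:ℝ) hpre
    obtain ⟨t, htU, htT⟩ := (hinf.diff hTfin).nonempty
    refine ⟨γ t, htU, fun k hk h0 => htT (Set.mem_biUnion hk h0)⟩
  · intro z hz
    simp only [Set.mem_setOf_eq] at hz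
    have hz' : ∀ k, 3 ≤ k → k ≤ n → fAux k z ≠ 0 := fun k h1 h2 =>
      hz k (Finset.mem_Icc.mpr ⟨h1, h2⟩)
    set g : Fin (n-2) → Fin (n-1) ⊕ Fin (n-1) :=
      fun c => Sum.inl ⟨(c:ℕ)+1, by have := c.isLt; omega⟩ with hg
    set M : Matrix (Fin (n-2)) (Fin (n-2)) ℝ := (jacC n z).submatrix id g with hM
    have hMentry : ∀ k c : Fin (n-2), M k c = pderivQ ((c:ℕ)+3) (Cfun ((k:ℕ)+3)) z :=
      fun k c => rfl
    have hBT : M.BlockTriangular OrderDual.toDual := by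
      intro k c h
      rw [hMentry]
      have h' : k < c := h
      simp only [Fin.lt_def] at h'
      exact pderivQ_Cfun_zero (by omega) z
    have hdet : M.det ≠ 0 := by
      rw [Matrix.det_of_lowerTriangular M hBT]
      apply Finset.prod_ne_zero_iff.mpr
      intro k _
      have hk := k.isLt
      rw [hMentry, pderivQ_Cfun_diag _ (by omega) z]
      exact mul_ne_zero (by norm_num) (hz' ((k:ℕ)+3) (by omega) (by omega))
    have hMrank : M.rank = n - 2 := by
      rw [Matrix.rank_of_isUnit M
        ((Matrix.isUnit_iff_isUnit_det M).mpr (isUnit_iff_ne_zero.mpr hdet)),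
        Fintype.card_fin]
    have hle : M.rank ≤ (jacC n z).rank := by
      rw [Matrix.rank_eq_finrank_span_cols, Matrix.rank_eq_finrank_span_cols]
      apply Submodule.finrank_mono
      apply Submodule.span_mono
      rintro _ ⟨c, rfl⟩
      exact ⟨g c, rfl⟩
    have hge : (jacC n z).rank ≤ n - 2 := by
      have h := (jacC n z).rank_le_card_height
      simpa using h
    omega
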